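/- arXiv:1509.02012 — 2 statements merged into one kernel-verified Lean document; each statement's English description precedes it below -/
import Mathlib

section
/- Let φ be a first-order formula with free variables x = x_in ∪ x_out, and let I be an interpretation with infinite domain Δ and finite active domain adom(I). Fix values d_in for x_in and let the answer set ans = { d_out ∈ Δ^n : I satisfies φ under the valuation assigning d_in to x_in and d_out to x_out }. If ans is finite, then every tuple in ans consists only of elements of adom(I) ∪ d_in; i.e., ans ⊆ (adom(I) ∪ {components of d_in})^n. -/
open FirstOrder FirstOrder.Language

/-- The active domain of an interpretation. -/
def adom (L : FirstOrder.Language) (M : Type*) [L.Structure M] : Set M :=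
  {d | (∃ (n : ℕ) (r : L.Relations n) (x : Fin n → M),
          Structure.RelMap r x ∧ d ∈ Set.range x) ∨
       ∃ c : L.Constants, Structure.funMap c (fun i => i.elim0) = d}

lemma swap_fix_of_rel {L : FirstOrder.Language} {M : Type*} [L.Structure M] [DecidableEq M]
    {a b : M} (ha : a ∉ adom L M) (hb : b ∉ adom L M)
    {n : ℕ} {r : L.Relations n} {x : Fin n → M}
    (hx : Structure.RelMap r x) : (Equiv.swap a b) ∘ x = x := by
  funext i
  have hmem : x i ∈ adom L M := Or.inl ⟨n, r, x, hx, ⟨i, rfl⟩⟩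
  exact Equiv.swap_apply_of_ne_of_ne (fun h => ha (by rw [← h]; exact hmem)) (fun h => hb (by rw [← h]; exact hmem))

/-- Swapping two elements outside the active domain is an automorphism. -/
def swapEquiv (L : FirstOrder.Language) (M : Type*) [L.Structure M] [DecidableEq M]
    (hrel : ∀ n, IsEmpty (L.Functions (n + 1)))
    (a b : M) (ha : a ∉ adom L M) (hb : b ∉ adom L M) : M ≃[L] M where
  toEquiv := Equiv.swap a b
  map_fun' := by
    intro n f x
    match n with
    | 0 =>
      show Equiv.swap a b (Structure.funMap f x) = Structure.funMap f (⇑(Equiv.swap a b) ∘ x)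
      have hx : x = fun i => i.elim0 := funext fun i => i.elim0
      have hmem : Structure.funMap f x ∈ adom L M := Or.inr ⟨f, by rw [hx]⟩
      have hfix : Equiv.swap a b (Structure.funMap f x) = Structure.funMap f x :=
        Equiv.swap_apply_of_ne_of_ne (fun h => ha (by rw [← h]; exact hmem)) (fun h => hb (by rw [← h]; exact hmem))
      have hx' : (Equiv.swap a b) ∘ x = x := funext fun i => i.elim0
      simp only [hfix, hx']
    | n + 1 => exact (hrel n).elim f
  map_rel' := by
    intro n r x
    show Structure.RelMap r (⇑(Equiv.swap a b) ∘ x) ↔ Structure.RelMap r x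
    constructor
    · intro h
      have h2 := swap_fix_of_rel ha hb h
      have hxx : (Equiv.swap a b) ∘ ((Equiv.swap a b) ∘ x) = x := by
        funext i; simp
      rw [show x = (Equiv.swap a b) ∘ x from hxx.symm.trans h2]
      exact h
    · intro h
      rw [swap_fix_of_rel ha hb h]; exact h

/-- If the domain is infinite, the active domain is finite, and the answer set
of `φ` under the partial assignment `d_in` is finite, then every answer tuple
takes all its components from `adom(I) ∪ range d_in`. -/
theorem stmt3 (L : FirstOrder.Language)
    [∀ n, Finite (L.Relations n)] [Finite L.Constants]
    (hrel : ∀ n, IsEmpty (L.Functions (n + 1)))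
    {M : Type*} [L.Structure M] [Infinite M]
    (hadom : (adom L M).Finite)
    {α β : Type*} [Finite α] [Finite β]
    (φ : L.Formula (α ⊕ β)) (d_in : α → M)
    (hfin : {d_out : β → M | φ.Realize (Sum.elim d_in d_out)}.Finite) :
    ∀ d_out ∈ {d_out : β → M | φ.Realize (Sum.elim d_in d_out)},
      ∀ j : β, d_out j ∈ adom L M ∪ Set.range d_in := by
  intro d_out hd j
  haveI := Classical.decEq M
  by_contra hj
  set a := d_out j with ha_def
  have ha_adom : a ∉ adom L M := fun h => hj (Or.inl h)
  have ha_in : a ∉ Set.range d_in := fun h => hj (Or.inr h)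
  set S : Set M := adom L M ∪ Set.range d_in ∪ Set.range d_out with hS_def
  have hSfin : S.Finite :=
    ((hadom.union (Set.finite_range d_in)).union (Set.finite_range d_out))
  have hinf : Sᶜ.Infinite := hSfin.infinite_compl
  -- build injective map from Sᶜ into the answer set
  have hmap : ∀ b ∈ Sᶜ, ((Equiv.swap a b) ∘ d_out) ∈
      {d_out : β → M | φ.Realize (Sum.elim d_in d_out)} := by
    intro b hb
    have hbS : b ∉ S := hb
    have hb_adom : b ∉ adom L M := fun h => hbS (Or.inl (Or.inl h))
    have hb_in : b ∉ Set.range d_in := fun h => hbS (Or.inl (Or.inr h))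
    let g := swapEquiv L M hrel a b ha_adom hb_adom
    have key : Sum.elim d_in ((Equiv.swap a b) ∘ d_out) = g ∘ (Sum.elim d_in d_out) := by
      funext k
      cases k with
      | inl i =>
        show d_in i = Equiv.swap a b (d_in i)
        exact (Equiv.swap_apply_of_ne_of_ne (fun h => ha_in (by rw [← h]; exact ⟨i, rfl⟩))
          (fun h => hb_in (by rw [← h]; exact ⟨i, rfl⟩))).symm
      | inr k => rfl
    show φ.Realize _
    rw [key, StrongHomClass.realize_formula g]
    exact hd
  have hinj : Set.InjOn (fun b => (Equiv.swap a b) ∘ d_out) Sᶜ := by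
    intro b1 h1 b2 h2 heq
    have e1 : ((Equiv.swap a b1) ∘ d_out) j = b1 := by
      simp [ha_def.symm, Equiv.swap_apply_left]
    have e2 : ((Equiv.swap a b2) ∘ d_out) j = b2 := by
      simp [ha_def.symm, Equiv.swap_apply_left]
    have h3 := congrFun heq j
    rw [← e1, ← e2]
    exact h3
  have : {d_out : β → M | φ.Realize (Sum.elim d_in d_out)}.Infinite := by
    refine Set.Infinite.mono ?_ (hinf.image hinj)
    rintro _ ⟨b, hb, rfl⟩
    exact hmap b hb
  exact this hfin
end

section
/- In any transition system built by Procedure-style saturation where (i) each new state introduces at most N fresh objects beyond the current accumulated active domain, (ii) every state's active domain has at most b' elements, and (iii) fresh objects are introduced only when fewer than N objects of the accumulated active domain lie outside the current state's active domain, the accumulated active domain ⋃_{q ∈ Q} adom(I(q)) never exceeds 2b' + N elements. -/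
/-- Saturation bound on the accumulated active domain: `A n` is the accumulated
active domain after `n` expansion steps. Initially it is the active domain of
the initial state (at most `b'` elements). At each step, the state picked for
expansion has active domain `D ⊆ A n` with at most `b'` elements; a set `O` of
at most `N` objects disjoint from `D` is chosen, containing objects outside the
accumulated active domain only if fewer than `N` objects of `A n` lie outside
`D`; and the new state's active domain `D'` satisfies `D' ⊆ D ∪ O` and
`|D'| ≤ b'`. Then the accumulated active domain never exceeds `2b' + N`
elements. -/
theorem stmt18 {Δ : Type*} (b' N : ℕ) (A : ℕ → Set Δ)
    (h0fin : (A 0).Finite) (h0 : (A 0).ncard ≤ b')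
    (hstep : ∀ n : ℕ, ∃ D O D' : Set Δ,
      D ⊆ A n ∧ D.Finite ∧ D.ncard ≤ b' ∧
      O.Finite ∧ O.ncard ≤ N ∧ Disjoint O D ∧
      D' ⊆ D ∪ O ∧ D'.Finite ∧ D'.ncard ≤ b' ∧
      (¬ O ⊆ A n → (A n \ D).ncard < N) ∧
      A (n + 1) = A n ∪ D') :
    ∀ n : ℕ, (A n).Finite ∧ (A n).ncard ≤ 2 * b' + N := by
  intro n
  induction n with
  | zero => exact ⟨h0fin, le_trans h0 (by omega)⟩
  | succ n ih =>
    obtain ⟨hfin, hcard⟩ := ih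
    obtain ⟨D, O, D', hDsub, hDfin, hDcard, hOfin, hOcard, hdisj, hD'sub, hD'fin,
      hD'card, hfresh, heq⟩ := hstep n
    rw [heq]
    refine ⟨hfin.union hD'fin, ?_⟩
    by_cases hOA : O ⊆ A n
    · have : D' ⊆ A n := hD'sub.trans (Set.union_subset hDsub hOA)
      rw [Set.union_eq_self_of_subset_right this]
      exact le_trans hcard (by omega)
    · have hlt : (A n \ D).ncard < N := hfresh hOA
      have hAsplit : A n = D ∪ (A n \ D) := (Set.union_diff_cancel hDsub).symm
      calc (A n ∪ D').ncard = (D ∪ (A n \ D) ∪ D').ncard := by rw [← hAsplit]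
        _ ≤ (D ∪ (A n \ D)).ncard + D'.ncard :=
            Set.ncard_union_le _ _
        _ ≤ D.ncard + (A n \ D).ncard + D'.ncard := by
            have := Set.ncard_union_le D (A n \ D)
            omega
        _ ≤ 2 * b' + N := by omega
end
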